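/- Let α and β be ordered probability vectors of the same length d with all entries positive, satisfying α₁ < β₁ and α_d < β_d. Then for every probability vector c of length m with all entries positive, the sorted product vectors α ⊗ c and β ⊗ c are majorization-incomparable: neither is majorized by the other. (Equivalently, no entanglement catalyst can make such a pair of incomparable pure states deterministically interconvertible under LOCC.) -/

import Mathlib

def tensorList (l₁ l₂ : List ℝ) : List ℝ :=
  l₁.flatMap fun x => l₂.map fun y => x * y

def partSum (l : List ℝ) (k : ℕ) : ℝ := (l.take k).sum

def MajLe (l₁ l₂ : List ℝ) : Prop := ∀ k : ℕ, partSum l₁ k ≤ partSum l₂ k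

lemma tensor_sum (l₁ l₂ : List ℝ) : (tensorList l₁ l₂).sum = l₁.sum * l₂.sum := by
  induction l₁ with
  | nil => simp [tensorList]
  | cons a t ih =>
    simp [tensorList, List.flatMap_cons] at ih ⊢
    rw [ih]; rw [List.sum_map_mul_left]; simp; ring

lemma tensor_length (l₁ l₂ : List ℝ) : (tensorList l₁ l₂).length = l₁.length * l₂.length := by
  induction l₁ with
  | nil => simp [tensorList]
  | cons a t ih =>
    rw [tensorList, List.flatMap_cons, List.length_append, List.length_map, List.length_cons]
    rw [tensorList] at ih; rw [ih]; ring

lemma mem_tensor {l₁ l₂ : List ℝ} {x : ℝ} :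
    x ∈ tensorList l₁ l₂ ↔ ∃ a ∈ l₁, ∃ b ∈ l₂, x = a * b := by
  simp [tensorList, eq_comm]

lemma exists_max (l : List ℝ) (h : l ≠ []) : ∃ M ∈ l, ∀ y ∈ l, y ≤ M := by
  induction l with
  | nil => simp at h
  | cons a t ih =>
    rcases eq_or_ne t [] with rfl | ht
    · exact ⟨a, by simp, by simp⟩
    · obtain ⟨M, hM, hMmax⟩ := ih ht
      refine ⟨max a M, ?_, ?_⟩
      · rcases le_total a M with h' | h'
        · simp [max_eq_right h', hM]
        · simp [max_eq_left h']
      · intro y hy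
        rcases List.mem_cons.1 hy with rfl | hy
        · exact le_max_left _ _
        · exact le_trans (hMmax y hy) (le_max_right _ _)

lemma exists_min (l : List ℝ) (h : l ≠ []) : ∃ M ∈ l, ∀ y ∈ l, M ≤ y := by
  obtain ⟨M, hM, hmax⟩ := exists_max (l.map (-·)) (by simpa using h)
  simp only [List.mem_map] at hM
  obtain ⟨x, hx, rfl⟩ := hM
  exact ⟨x, hx, fun y hy => by have := hmax (-y) (List.mem_map_of_mem (f := fun x => -x) hy); linarith⟩

lemma sorted_head_max {l : List ℝ} (h : l.Pairwise (· ≥ ·)) (hne : l ≠ []) :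
    ∀ x ∈ l, x ≤ l.head hne := by
  cases l with
  | nil => simp at hne
  | cons a t =>
    intro x hx
    rcases List.mem_cons.1 hx with rfl | hx
    · simp
    · simpa using List.rel_of_pairwise_cons h hx

lemma sorted_last_min {l : List ℝ} (h : l.Pairwise (· ≥ ·)) (hne : l ≠ []) :
    ∀ x ∈ l, l.getLast hne ≤ x := by
  induction l with
  | nil => simp at hne
  | cons a t ih =>
    intro x hx
    rcases eq_or_ne t [] with rfl | ht
    · simp at hx; simp [hx]
    · rw [List.getLast_cons ht]
      rcases List.mem_cons.1 hx with rfl | hx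
      · exact List.rel_of_pairwise_cons h (List.getLast_mem ht)
      · exact ih (List.pairwise_cons.1 h).2 ht x hx

lemma take_sub_one_sum {l : List ℝ} (hne : l ≠ []) :
    (l.take (l.length - 1)).sum = l.sum - l.getLast hne := by
  have h1 := congrArg List.sum (List.dropLast_append_getLast hne)
  rw [List.sum_append] at h1
  rw [← List.dropLast_eq_take]
  simp at h1
  linarith

lemma getD_zero_head {l : List ℝ} (hne : l ≠ []) : l.getD 0 0 = l.head hne := by
  cases l with
  | nil => simp at hne
  | cons a t => simp

lemma getD_last {l : List ℝ} (hne : l ≠ []) : l.getD (l.length - 1) 0 = l.getLast hne := by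
  have hlt : l.length - 1 < l.length := by
    have : 0 < l.length := List.length_pos_iff.2 hne
    omega
  rw [List.getD_eq_getElem _ _ hlt, List.getLast_eq_getElem]

lemma partSum_one {l : List ℝ} (hne : l ≠ []) : partSum l 1 = l.head hne := by
  cases l with
  | nil => simp at hne
  | cons a t => simp [partSum]

/-- Paper's claim in Section 4.1.2: if `α, β` are ordered probability vectors of the same
length `d` with positive entries, `α₁ < β₁` and `α_d < β_d`, then for every positive
probability vector `c` the sorted product vectors `α ⊗ c` and `β ⊗ c` are
majorization-incomparable: no catalyst can make such a pair interconvertible. -/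
theorem no_catalyst (d : ℕ) (hd : 0 < d) (α β : List ℝ)
    (hαlen : α.length = d) (hβlen : β.length = d)
    (hαsorted : α.Pairwise (· ≥ ·)) (hβsorted : β.Pairwise (· ≥ ·))
    (hαpos : ∀ x ∈ α, 0 < x) (hβpos : ∀ x ∈ β, 0 < x)
    (hαsum : α.sum = 1) (hβsum : β.sum = 1)
    (hfirst : α.getD 0 0 < β.getD 0 0)
    (hlast : α.getD (d - 1) 0 < β.getD (d - 1) 0)
    (m : ℕ) (hm : 0 < m) (c : List ℝ) (hclen : c.length = m)
    (hcpos : ∀ x ∈ c, 0 < x) (hcsum : c.sum = 1) :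
    ∀ γ δ : List ℝ,
      γ.Perm (tensorList α c) → γ.Pairwise (· ≥ ·) →
      δ.Perm (tensorList β c) → δ.Pairwise (· ≥ ·) →
      ¬ MajLe γ δ ∧ ¬ MajLe δ γ := by
  intro γ δ hγp hγs hδp hδs
  have hαne : α ≠ [] := by intro h; rw [h] at hαlen; simp at hαlen; omega
  have hβne : β ≠ [] := by intro h; rw [h] at hβlen; simp at hβlen; omega
  have hcne : c ≠ [] := by intro h; rw [h] at hclen; simp at hclen; omega
  obtain ⟨Mc, hMcm, hMcmax⟩ := exists_max c hcne
  obtain ⟨mc, hmcm, hmcmin⟩ := exists_min c hcne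
  have hMcpos := hcpos Mc hMcm
  have hmcpos := hcpos mc hmcm
  have hγlen : γ.length = d * m := by
    rw [hγp.length_eq, tensor_length, hαlen, hclen]
  have hδlen : δ.length = d * m := by
    rw [hδp.length_eq, tensor_length, hβlen, hclen]
  have hγne : γ ≠ [] := by
    intro h; rw [h] at hγlen; simp at hγlen; rcases hγlen with h|h <;> omega
  have hδne : δ ≠ [] := by
    intro h; rw [h] at hδlen; simp at hδlen; rcases hδlen with h|h <;> omega
  have hγsum : γ.sum = 1 := by rw [hγp.sum_eq, tensor_sum, hαsum, hcsum]; ring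
  have hδsum : δ.sum = 1 := by rw [hδp.sum_eq, tensor_sum, hβsum, hcsum]; ring
  -- first entries
  have hfirst' : α.head hαne < β.head hβne := by
    rwa [getD_zero_head hαne, getD_zero_head hβne] at hfirst
  have hlast' : α.getLast hαne < β.getLast hβne := by
    have hα : α.getD (d - 1) 0 = α.getLast hαne := by rw [← hαlen]; exact getD_last hαne
    have hβ : β.getD (d - 1) 0 = β.getLast hβne := by rw [← hβlen]; exact getD_last hβne
    rwa [hα, hβ] at hlast
  constructor
  · -- ¬ MajLe γ δ, fails at k = d*m - 1
    intro h
    have hk := h (γ.length - 1)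
    rw [show partSum γ (γ.length - 1) = γ.sum - γ.getLast hγne from take_sub_one_sum hγne] at hk
    rw [show γ.length = δ.length by rw [hγlen, hδlen]] at hk
    rw [show partSum δ (δ.length - 1) = δ.sum - δ.getLast hδne from take_sub_one_sum hδne] at hk
    rw [hγsum, hδsum] at hk
    -- γ.getLast ≤ α_d * mc
    have h1 : γ.getLast hγne ≤ α.getLast hαne * mc := by
      apply sorted_last_min hγs hγne
      rw [hγp.mem_iff, mem_tensor]
      exact ⟨_, List.getLast_mem hαne, mc, hmcm, rfl⟩
    -- β_d * mc ≤ δ.getLast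
    have h2 : β.getLast hβne * mc ≤ δ.getLast hδne := by
      have hmem : δ.getLast hδne ∈ tensorList β c := hδp.subset (List.getLast_mem hδne)
      rw [mem_tensor] at hmem
      obtain ⟨a, ha, b, hb, heq⟩ := hmem
      rw [heq]
      exact mul_le_mul (sorted_last_min hβsorted hβne a ha) (hmcmin b hb)
        (le_of_lt hmcpos) (le_of_lt (hβpos a ha))
    have h3 : α.getLast hαne * mc < β.getLast hβne * mc :=
      mul_lt_mul_of_pos_right hlast' hmcpos
    linarith
  · -- ¬ MajLe δ γ, fails at k = 1
    intro h
    have hk := h 1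
    rw [partSum_one hγne, partSum_one hδne] at hk
    have h1 : γ.head hγne ≤ α.head hαne * Mc := by
      have hmem : γ.head hγne ∈ tensorList α c := hγp.subset (List.head_mem hγne)
      rw [mem_tensor] at hmem
      obtain ⟨a, ha, b, hb, heq⟩ := hmem
      rw [heq]
      exact mul_le_mul (sorted_head_max hαsorted hαne a ha) (hMcmax b hb)
        (le_of_lt (hcpos b hb)) (le_of_lt (hαpos _ (List.head_mem hαne)))
    have h2 : β.head hβne * Mc ≤ δ.head hδne := by
      apply sorted_head_max hδs hδne
      rw [hδp.mem_iff, mem_tensor]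
      exact ⟨_, List.head_mem hβne, Mc, hMcm, rfl⟩
    have h3 : α.head hαne * Mc < β.head hβne * Mc :=
      mul_lt_mul_of_pos_right hfirst' hMcpos
    linarith
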